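/- Let S be an action-based randomization mechanism with Act = {a_1,…,a_k}, σ the lock-step non-adaptive strategy and σ_n its truncation at level n, with n a multiple of k. Fix x ∈ X and ε > 0, and let 𝒰^{(n)}(x,ε) = { y^n ∈ Y^n : D(t_{y^n(i)} ‖ p_{a_i}(·|x)) ≤ ε for all i = 1,…,k }. Then p_{σ_n}(𝒰^{(n)}(x,ε) | x) ≥ 1 − 2^{−(n/k)ε}·(n/k + 1)^{k|Y|}·C, where C = k·max_{1≤i≤k} binom(k,i) is a constant not depending on n. -/

import Mathlib

open scoped BigOperators Classical

noncomputable section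

variable {X Y A : Type*}

/-- an action-based randomization mechanism: each row of each matrix `M_a` is a
probability distribution on observations. -/
def IsMechanism [Fintype Y] (M : A → X → Y → ℝ) : Prop :=
  ∀ a x, M a x ∈ stdSimplex ℝ Y

/-- `p_{σ_n}(ys|x)` for the lock-step strategy playing `a 0, …, a (k-1)` cyclically:
the product `∏_j p_{a_{(j mod k)}}(y_j | x)`, where `j` starts from the given counter. -/
def cycLik (M : A → X → Y → ℝ) {k : ℕ} (hk : 0 < k) (a : Fin k → A) (x : X) :
    ℕ → List Y → ℝ
  | _, [] => 1
  | j, y :: ys => M (a ⟨j % k, Nat.mod_lt _ hk⟩) x y * cycLik M hk a x (j + 1) ys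

/-- `ys(i)`: the subsequence of the symbols of `ys` at (0-based) positions congruent to
`i` modulo `k`. -/
def subseqMod (k i : ℕ) (ys : List Y) : List Y :=
  (((List.range ys.length).zip ys).filter (fun q => q.1 % k == i)).map Prod.snd

/-- the type (empirical distribution) of a finite sequence of observations. -/
def typeOf [DecidableEq Y] (w : List Y) : Y → ℝ :=
  fun y => (w.count y : ℝ) / (w.length : ℝ)

/-- Shannon entropy (in bits). -/
def shannonH {Z : Type*} [Fintype Z] (q : Z → ℝ) : ℝ :=
  -∑ z : Z, q z * Real.logb 2 (q z)

/-- Kullback–Leibler divergence `D(q‖r)` (base 2), valued in `EReal`, with the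
conventions `0·log(0/r) = 0` and `q(y)·log(q(y)/0) = +∞` for `q(y) > 0`. -/
def klD [Fintype Y] (q r : Y → ℝ) : EReal :=
  ∑ y : Y, if q y = 0 then (0 : EReal)
    else if r y = 0 then (⊤ : EReal)
    else ((q y * Real.logb 2 (q y / r y) : ℝ) : EReal)

/-! ### Auxiliary machinery -/

/-- recursive version of `subseqMod` with a position counter. -/
def sub (k i : ℕ) : ℕ → List Y → List Y
  | _, [] => []
  | j, y :: l => if j % k = i then y :: sub k i (j+1) l else sub k i (j+1) l

lemma sub_eq_aux (k i : ℕ) : ∀ (l : List Y) (j : ℕ),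
    (((List.range' j l.length).zip l).filter (fun q => q.1 % k == i)).map Prod.snd = sub k i j l := by
  intro l
  induction l with
  | nil => intro j; simp [sub]
  | cons y l ih =>
    intro j
    rw [List.length_cons, List.range'_succ, List.zip_cons_cons, List.filter_cons]
    by_cases h : j % k = i
    · rw [if_pos (by simpa using h), List.map_cons, ih]
      simp [sub, h]
    · rw [if_neg (by simpa using h), ih]
      simp [sub, h]

lemma subseqMod_eq_sub (k i : ℕ) (l : List Y) : subseqMod k i l = sub k i 0 l := by
  rw [subseqMod, ← sub_eq_aux k i l 0, List.range_eq_range']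

lemma sub_append (k i : ℕ) : ∀ (l1 l2 : List Y) (j : ℕ),
    sub k i j (l1 ++ l2) = sub k i j l1 ++ sub k i (j + l1.length) l2 := by
  intro l1
  induction l1 with
  | nil => intro l2 j; simp [sub]
  | cons y l ih =>
    intro l2 j
    simp only [List.cons_append, sub, List.append_eq, ih l2 (j+1), List.length_cons]
    have he : j + 1 + l.length = j + (l.length + 1) := by omega
    rw [he]
    by_cases h : j % k = i <;> simp [h]

lemma sub_add_k (k i : ℕ) : ∀ (l : List Y) (j : ℕ),
    sub k i (j + k) l = sub k i j l := by
  intro l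
  induction l with
  | nil => intro j; simp [sub]
  | cons y l ih =>
    intro j
    simp only [sub, Nat.add_mod_right]
    have : j + k + 1 = (j + 1) + k := by omega
    rw [this, ih]

lemma sub_add_mul_k (k i : ℕ) (l : List Y) (j t : ℕ) :
    sub k i (j + k * t) l = sub k i j l := by
  induction t with
  | zero => simp
  | succ t ih =>
    have : j + k * (t + 1) = (j + k * t) + k := by ring
    rw [this, sub_add_k k i, ih]

lemma sub_ofFn_block (k i : ℕ) : ∀ (r : ℕ) (j : ℕ) (b : Fin r → Y), j + r ≤ k →
    sub k i j (List.ofFn b) =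
      if h : j ≤ i ∧ i < j + r then [b ⟨i - j, by omega⟩] else [] := by
  intro r
  induction r with
  | zero =>
    intro j b _
    rw [List.ofFn_zero]
    simp only [sub]
    rw [dif_neg (by omega)]
  | succ r ih =>
    intro j b hjr
    rw [List.ofFn_succ]
    simp only [sub]
    have hjk : j < k := by omega
    rw [Nat.mod_eq_of_lt hjk]
    by_cases h : j = i
    · subst h
      rw [if_pos rfl, ih (j+1) (fun t => b t.succ) (by omega),
        dif_neg (by omega), dif_pos ⟨le_refl j, by omega⟩]
      have : (⟨j - j, by omega⟩ : Fin (r+1)) = 0 := by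
        apply Fin.ext; simp
      rw [this]
    · rw [if_neg h, ih (j+1) (fun t => b t.succ) (by omega)]
      by_cases h2 : j + 1 ≤ i ∧ i < j + 1 + r
      · rw [dif_pos h2, dif_pos ⟨by omega, by omega⟩]
        have : (⟨i - j, by omega⟩ : Fin (r+1)) = Fin.succ ⟨i - (j+1), by omega⟩ := by
          apply Fin.ext; simp [Fin.succ]; omega
        rw [this]
      · rw [dif_neg h2, dif_neg (by omega)]

lemma ltkm {k m i t : ℕ} (hi : i < k) (ht : t < m) : i + k * t < k * m :=
  calc i + k * t < k + k * t := by omega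
    _ = k * (t + 1) := by ring
    _ ≤ k * m := Nat.mul_le_mul_left k (by omega)

lemma modk {k : ℕ} {i : ℕ} (hi : i < k) (t : ℕ) : (i + k * t) % k = i := by
  rw [Nat.add_mul_mod_self_left, Nat.mod_eq_of_lt hi]

lemma divk {k : ℕ} (hk : 0 < k) {i : ℕ} (hi : i < k) (t : ℕ) : (i + k * t) / k = t := by
  rw [Nat.add_mul_div_left _ _ hk, Nat.div_eq_of_lt hi, Nat.zero_add]

set_option maxHeartbeats 1000000 in
lemma sub_ofFn (k i : ℕ) (hi : i < k) : ∀ (m : ℕ) (g : Fin (k * m) → Y),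
    sub k i 0 (List.ofFn g) =
      List.ofFn (fun t : Fin m => g ⟨i + k * t, ltkm hi t.isLt⟩) := by
  intro m
  induction m with
  | zero =>
    intro g
    have : List.ofFn g = [] := by
      apply List.eq_nil_of_length_eq_zero; simp
    rw [this]
    simp [sub]
  | succ m ih =>
    intro g
    have h1 : k * m + k = k * (m + 1) := by ring
    have hg : List.ofFn g = List.ofFn (fun j : Fin (k*m + k) => g (Fin.cast h1 j)) := by
      apply List.ext_getElem (by simp [h1])
      intro p hp1 hp2
      simp [Fin.cast]
    rw [hg, List.ofFn_add, sub_append, ih]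
    have hlen : (List.ofFn fun p : Fin (k*m) =>
        g (Fin.cast h1 (Fin.castLE (by omega) p))).length = k * m := by simp
    rw [hlen, sub_add_mul_k k i _ 0 m,
      sub_ofFn_block k i k 0 _ (by omega), dif_pos ⟨by omega, by omega⟩,
      List.ofFn_succ']
    simp only [List.concat_eq_append]
    apply List.ext_getElem (by simp)
    intro p hp1 hp2
    simp only [List.length_append, List.length_ofFn, List.length_singleton] at hp1 hp2
    rw [List.getElem_append, List.getElem_append]
    simp only [List.length_ofFn]
    split_ifs with h
    · rw [List.getElem_ofFn, List.getElem_ofFn]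
      exact congrArg g (Fin.ext (by
        simp only [Fin.coe_cast, Fin.coe_castLE, Fin.coe_castSucc]))
    · simp only [List.getElem_singleton]
      exact congrArg g (Fin.ext (by
        simp only [Fin.coe_cast, Fin.coe_natAdd, Fin.val_last]; omega))

lemma cycLik_nonneg [Fintype Y] (M : A → X → Y → ℝ) (hM : IsMechanism M) {k : ℕ}
    (hk : 0 < k) (a : Fin k → A) (x : X) : ∀ (l : List Y) (j : ℕ),
    0 ≤ cycLik M hk a x j l := by
  intro l
  induction l with
  | nil => intro j; simp [cycLik]
  | cons y l ih =>
    intro j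
    exact mul_nonneg ((hM _ x).1 y) (ih (j+1))

lemma cycLik_ofFn [Fintype Y] (M : A → X → Y → ℝ) {k : ℕ} (hk : 0 < k) (a : Fin k → A)
    (x : X) : ∀ (N : ℕ) (g : Fin N → Y) (j : ℕ),
    cycLik M hk a x j (List.ofFn g) =
      ∏ t : Fin N, M (a ⟨(j + ↑t) % k, Nat.mod_lt _ hk⟩) x (g t) := by
  intro N
  induction N with
  | zero => intro g j; rw [List.ofFn_zero]; simp [cycLik]
  | succ N ih =>
    intro g j
    rw [List.ofFn_succ]
    show M (a ⟨j % k, Nat.mod_lt _ hk⟩) x (g 0) *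
      cycLik M hk a x (j+1) (List.ofFn fun t => g t.succ) = _
    rw [ih _ (j+1), Fin.prod_univ_succ]
    congr 1
    apply Finset.prod_congr rfl
    intro t _
    have h1 : (j + (↑t + 1)) = j + 1 + ↑t := by omega
    simp [h1]

/-- the finset of lists of a given length. -/
def listsLen [Fintype Y] (m : ℕ) : Finset (List Y) :=
  (Finset.univ : Finset (Fin m → Y)).image List.ofFn

lemma mem_listsLen [Fintype Y] (m : ℕ) (l : List Y) :
    l ∈ listsLen m ↔ l.length = m := by
  constructor
  · intro h
    obtain ⟨g, -, rfl⟩ := Finset.mem_image.mp h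
    simp
  · intro h
    apply Finset.mem_image.mpr
    refine ⟨fun t : Fin m => l.get (Fin.cast h.symm t), Finset.mem_univ _, ?_⟩
    apply List.ext_getElem (by simp [h])
    intro p hp1 hp2
    simp [Fin.cast, List.get_eq_getElem]

lemma sum_listsLen [Fintype Y] (m : ℕ) (f : List Y → ℝ) :
    ∑ l ∈ listsLen m, f l = ∑ g : Fin m → Y, f (List.ofFn g) := by
  rw [listsLen, Finset.sum_image]
  intro g1 _ g2 _ h
  exact List.ofFn_injective h

lemma ereal_coe_sum {ι : Type*} (s : Finset ι) (f : ι → ℝ) :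
    ((∑ i ∈ s, f i : ℝ) : EReal) = ∑ i ∈ s, (f i : EReal) :=
  map_sum (⟨⟨Real.toEReal, rfl⟩, fun x y => EReal.coe_add x y⟩ : ℝ →+ EReal) f s

lemma count_ofFn [DecidableEq Y] : ∀ (m : ℕ) (w : Fin m → Y) (y : Y),
    (List.ofFn w).count y = (Finset.univ.filter fun t => w t = y).card := by
  intro m
  induction m with
  | zero => intro w y; simp
  | succ m ih =>
    intro w y
    rw [List.ofFn_succ, List.count_cons, ih (fun t => w t.succ)]
    rw [Finset.card_filter, Finset.card_filter, Fin.sum_univ_succ]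
    simp [add_comm, beq_iff_eq]

lemma prod_eq_pow_card [Fintype Y] [DecidableEq Y] {m : ℕ} (w : Fin m → Y) (f : Y → ℝ) :
    ∏ t, f (w t) = ∏ y, f y ^ (Finset.univ.filter fun t => w t = y).card := by
  rw [← Finset.prod_fiberwise_of_maps_to (fun t _ => Finset.mem_univ (w t)) (fun t => f (w t))]
  apply Finset.prod_congr rfl
  intro y _
  rw [Finset.prod_congr rfl (fun t ht => by rw [(Finset.mem_filter.mp ht).2]),
    Finset.prod_const]

lemma sum_prod_eq_one [Fintype Y] (q : Y → ℝ) (hq : ∑ y, q y = 1) (m : ℕ) :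
    ∑ w : Fin m → Y, ∏ t, q (w t) = 1 := by
  have h := Finset.prod_univ_sum (fun _ : Fin m => (Finset.univ : Finset Y))
    (fun (_ : Fin m) (y : Y) => q y)
  rw [Fintype.piFinset_univ] at h
  rw [← h]
  simp [hq]

lemma rpow_sum {ι : Type*} (s : Finset ι) (x : ι → ℝ) :
    (2:ℝ) ^ (∑ i ∈ s, x i) = ∏ i ∈ s, (2:ℝ) ^ (x i) := by
  induction s using Finset.cons_induction with
  | empty => simp
  | cons i s hi ih => rw [Finset.sum_cons, Finset.prod_cons, Real.rpow_add two_pos, ih]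

/-- the key single-class bound from the method of types. -/
lemma single_class [Fintype Y] [DecidableEq Y] (p : Y → ℝ) (hp : p ∈ stdSimplex ℝ Y)
    (m : ℕ) (hm : 0 < m) (ε : ℝ) (hε : 0 < ε) :
    ∑ w : Fin m → Y,
        (if ¬ (klD (typeOf (List.ofFn w)) p ≤ (ε : EReal)) then ∏ t, p (w t) else 0)
      ≤ ((m : ℝ) + 1) ^ (Fintype.card Y) * 2 ^ (-(m:ℝ) * ε) := by
  classical
  have hmR : (0:ℝ) < m := by exact_mod_cast hm
  set cnt : (Fin m → Y) → (Y → Fin (m+1)) := fun w y =>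
    ⟨(Finset.univ.filter fun t => w t = y).card,
      Nat.lt_succ_of_le (le_trans (Finset.card_filter_le _ _) (by simp))⟩ with hcnt
  rw [← Finset.sum_fiberwise_of_maps_to (t := (Finset.univ : Finset (Y → Fin (m+1))))
    (fun w _ => Finset.mem_univ (cnt w))]
  have key : ∀ c : Y → Fin (m+1),
      ∑ w ∈ Finset.univ.filter (fun w => cnt w = c),
        (if ¬ (klD (typeOf (List.ofFn w)) p ≤ (ε : EReal)) then ∏ t, p (w t) else 0)
      ≤ 2 ^ (-(m:ℝ) * ε) := by
    intro c
    set qc : Y → ℝ := fun y => (c y : ℝ) / m with hqc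
    have hfib : ∀ w ∈ Finset.univ.filter (fun w => cnt w = c),
        typeOf (List.ofFn w) = qc ∧ ∏ t, p (w t) = ∏ y, p y ^ (c y : ℕ) := by
      intro w hw
      have hc : cnt w = c := (Finset.mem_filter.mp hw).2
      constructor
      · funext y
        have h1 : (cnt w y : ℕ) = (c y : ℕ) := by rw [hc]
        simp only [typeOf, count_ofFn, List.length_ofFn]
        rw [show (Finset.univ.filter fun t => w t = y).card = (c y : ℕ) from h1]
      · rw [prod_eq_pow_card w p]
        apply Finset.prod_congr rfl
        intro y _
        congr 1
        exact (by rw [hc] : (cnt w y : ℕ) = (c y : ℕ))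
    have hfibq : ∀ w ∈ Finset.univ.filter (fun w => cnt w = c),
        ∏ t, qc (w t) = ∏ y, qc y ^ (c y : ℕ) := by
      intro w hw
      have hc : cnt w = c := (Finset.mem_filter.mp hw).2
      rw [prod_eq_pow_card w qc]
      apply Finset.prod_congr rfl
      intro y _
      congr 1
      exact (by rw [hc] : (cnt w y : ℕ) = (c y : ℕ))
    by_cases hz : ∃ y, (c y : ℕ) ≠ 0 ∧ p y = 0
    · obtain ⟨y0, hy0, hp0⟩ := hz
      have hzz : ∀ w ∈ Finset.univ.filter (fun w => cnt w = c),
          (if ¬ (klD (typeOf (List.ofFn w)) p ≤ (ε : EReal)) then ∏ t, p (w t) else 0)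
            = 0 := by
        intro w hw
        have h2 := (hfib w hw).2
        have hzero : ∏ t, p (w t) = 0 := by
          rw [h2]
          exact Finset.prod_eq_zero (Finset.mem_univ y0) (by rw [hp0]; exact zero_pow hy0)
        rw [hzero]
        split <;> rfl
      rw [Finset.sum_congr rfl hzz, Finset.sum_const_zero]
      positivity
    · push_neg at hz
      set d : ℝ := ∑ y, (if qc y = 0 then 0 else qc y * Real.logb 2 (qc y / p y)) with hd
      have hqc0 : ∀ y, qc y = 0 ↔ (c y : ℕ) = 0 := by
        intro y
        simp only [hqc, div_eq_zero_iff]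
        constructor
        · rintro (h | h)
          · exact_mod_cast h
          · exact absurd h (by positivity)
        · intro h; left; exact_mod_cast h
      have hqcnn : ∀ y, 0 ≤ qc y := fun y => by positivity
      have hkl : klD qc p = (d : EReal) := by
        rw [klD, hd, ereal_coe_sum]
        apply Finset.sum_congr rfl
        intro y _
        by_cases h0 : qc y = 0
        · simp [h0]
        · have hpy : p y ≠ 0 := hz y (fun hcy => h0 ((hqc0 y).mpr hcy))
          simp [h0, hpy]
      by_cases hbad : ¬ (klD qc p ≤ (ε : EReal))
      · have hεd : ε < d := by
          rw [hkl] at hbad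
          have := lt_of_not_ge hbad
          exact_mod_cast this
        rcases Finset.eq_empty_or_nonempty
            (Finset.univ.filter (fun w : Fin m → Y => cnt w = c)) with he | hne
        · rw [he, Finset.sum_empty]
          positivity
        · obtain ⟨w0, hw0⟩ := hne
          have hsumc : ∑ y, (c y : ℕ) = m := by
            have hc : cnt w0 = c := (Finset.mem_filter.mp hw0).2
            have h2 : (Finset.univ : Finset (Fin m)).card
                = ∑ y : Y, (Finset.univ.filter fun t => w0 t = y).card :=
              Finset.card_eq_sum_card_fiberwise (fun t _ => Finset.mem_univ (w0 t))
            have h3 : ∀ y, (c y : ℕ) = (Finset.univ.filter fun t => w0 t = y).card := by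
              intro y
              rw [← hc]
            rw [Finset.sum_congr rfl (fun y _ => h3 y), ← h2]
            simp
          have hqcsum : ∑ y, qc y = 1 := by
            simp only [hqc]
            rw [← Finset.sum_div]
            rw [show (∑ y, ((c y : ℕ) : ℝ)) = (m : ℝ) by exact_mod_cast hsumc]
            field_simp
          have hfact : ∏ y, p y ^ (c y : ℕ)
              = (∏ y, qc y ^ (c y : ℕ)) * 2 ^ (-(m:ℝ) * d) := by
            have step : ∀ y : Y, p y ^ (c y : ℕ)
                = qc y ^ (c y : ℕ) *
                  2 ^ (-(if qc y = 0 then 0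
                    else (m:ℝ) * (qc y * Real.logb 2 (qc y / p y)))) := by
              intro y
              by_cases h0 : qc y = 0
              · have hc0 : (c y : ℕ) = 0 := (hqc0 y).mp h0
                simp [hc0, h0]
              · have hcy : (c y : ℕ) ≠ 0 := fun h => h0 ((hqc0 y).mpr h)
                have hpy : p y ≠ 0 := hz y hcy
                have hppos : 0 < p y := lt_of_le_of_ne (hp.1 y) (Ne.symm hpy)
                have hqpos : 0 < qc y := lt_of_le_of_ne (hqcnn y) (Ne.symm h0)
                rw [if_neg h0]
                have hcR : ((c y : ℕ) : ℝ) = (m : ℝ) * qc y := by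
                  simp only [hqc]; field_simp
                have e1 : p y ^ (c y : ℕ) = qc y ^ (c y : ℕ) * (p y / qc y) ^ (c y : ℕ) := by
                  rw [← mul_pow]
                  congr 1
                  field_simp
                rw [e1]
                congr 1
                have e2 : (p y / qc y) ^ ((c y : ℕ) : ℝ)
                    = (2:ℝ) ^ (((c y : ℕ) : ℝ) * Real.logb 2 (p y / qc y)) := by
                  rw [mul_comm, Real.rpow_mul (by norm_num : (0:ℝ) ≤ 2),
                    Real.rpow_logb two_pos (by norm_num) (by positivity)]
                have e3 : (p y / qc y) ^ (c y : ℕ)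
                    = (2:ℝ) ^ (((c y : ℕ) : ℝ) * Real.logb 2 (p y / qc y)) := by
                  rw [← e2, Real.rpow_natCast]
                rw [e3]
                congr 1
                have hlog : Real.logb 2 (p y / qc y) = - Real.logb 2 (qc y / p y) := by
                  rw [Real.logb_div hpy (ne_of_gt hqpos), Real.logb_div (ne_of_gt hqpos) hpy]
                  ring
                rw [hcR, hlog]
                ring
            rw [Finset.prod_congr rfl (fun y _ => step y), Finset.prod_mul_distrib]
            congr 1
            rw [← rpow_sum]
            congr 1
            rw [neg_mul, hd, Finset.mul_sum, ← Finset.sum_neg_distrib]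
            apply Finset.sum_congr rfl
            intro y _
            by_cases h0 : qc y = 0 <;> simp [h0]
          have hterm : ∀ w ∈ Finset.univ.filter (fun w => cnt w = c),
              (if ¬ (klD (typeOf (List.ofFn w)) p ≤ (ε : EReal)) then ∏ t, p (w t) else 0)
                = (∏ t, qc (w t)) * 2 ^ (-(m:ℝ) * d) := by
            intro w hw
            rw [(hfib w hw).1, if_pos hbad, (hfib w hw).2, hfact, hfibq w hw]
          rw [Finset.sum_congr rfl hterm, ← Finset.sum_mul]
          have hsle : ∑ w ∈ Finset.univ.filter (fun w : Fin m → Y => cnt w = c),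
              ∏ t, qc (w t) ≤ 1 := by
            rw [← sum_prod_eq_one qc hqcsum m]
            apply Finset.sum_le_sum_of_subset_of_nonneg (Finset.filter_subset _ _)
            intro w _ _
            exact Finset.prod_nonneg (fun t _ => hqcnn (w t))
          calc (∑ w ∈ Finset.univ.filter (fun w : Fin m → Y => cnt w = c),
                ∏ t, qc (w t)) * 2 ^ (-(m:ℝ) * d)
              ≤ 1 * 2 ^ (-(m:ℝ) * d) :=
                mul_le_mul_of_nonneg_right hsle (by positivity)
            _ = 2 ^ (-(m:ℝ) * d) := one_mul _
            _ ≤ 2 ^ (-(m:ℝ) * ε) := by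
                apply (Real.rpow_le_rpow_left_iff one_lt_two).mpr
                nlinarith
      · have hzz : ∀ w ∈ Finset.univ.filter (fun w => cnt w = c),
            (if ¬ (klD (typeOf (List.ofFn w)) p ≤ (ε : EReal)) then ∏ t, p (w t) else 0)
              = 0 := by
          intro w hw
          rw [(hfib w hw).1, if_neg hbad]
        rw [Finset.sum_congr rfl hzz, Finset.sum_const_zero]
        positivity
  calc ∑ c : Y → Fin (m+1), ∑ w ∈ Finset.univ.filter (fun w => cnt w = c),
        (if ¬ (klD (typeOf (List.ofFn w)) p ≤ (ε : EReal)) then ∏ t, p (w t) else 0)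
      ≤ ∑ _c : Y → Fin (m+1), (2:ℝ) ^ (-(m:ℝ) * ε) := Finset.sum_le_sum (fun c _ => key c)
    _ = ((m : ℝ) + 1) ^ (Fintype.card Y) * 2 ^ (-(m:ℝ) * ε) := by
        rw [Finset.sum_const, Finset.card_univ, Fintype.card_fun, Fintype.card_fin,
          nsmul_eq_mul, Nat.cast_pow]
        norm_num

lemma one_sub_sum_le_prod {ι : Type*} (s : Finset ι) (f : ι → ℝ)
    (h0 : ∀ i ∈ s, 0 ≤ f i) (h1 : ∀ i ∈ s, f i ≤ 1) :
    1 - ∑ i ∈ s, (1 - f i) ≤ ∏ i ∈ s, f i := by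
  induction s using Finset.cons_induction with
  | empty => simp
  | cons a s ha ih =>
    rw [Finset.prod_cons, Finset.sum_cons]
    have hfa0 := h0 a (Finset.mem_cons_self a s)
    have hfa1 := h1 a (Finset.mem_cons_self a s)
    have ihh := ih (fun i hi => h0 i (Finset.mem_cons_of_mem hi))
      (fun i hi => h1 i (Finset.mem_cons_of_mem hi))
    have hs0 : 0 ≤ ∑ i ∈ s, (1 - f i) :=
      Finset.sum_nonneg fun i hi => by linarith [h1 i (Finset.mem_cons_of_mem hi)]
    have hp0 : 0 ≤ ∏ i ∈ s, f i :=
      Finset.prod_nonneg fun i hi => h0 i (Finset.mem_cons_of_mem hi)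
    nlinarith [mul_le_mul_of_nonneg_left ihh hfa0]

lemma ite_forall_prod {k : ℕ} (P : Fin k → Prop) [DecidablePred P] [Decidable (∀ i, P i)]
    (f : Fin k → ℝ) :
    (if (∀ i, P i) then ∏ i, f i else 0) = ∏ i, (if P i then f i else 0) := by
  by_cases h : ∀ i, P i
  · rw [if_pos h]
    exact Finset.prod_congr rfl fun i _ => (if_pos (h i)).symm
  · rw [if_neg h]
    push_neg at h
    obtain ⟨i0, hi0⟩ := h
    exact (Finset.prod_eq_zero (Finset.mem_univ i0)
      (if_neg hi0 : (if P i0 then f i0 else 0) = (0:ℝ))).symm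

/-- interleaving `k` blocks of length `m` into a single sequence. -/
def interleave (k m : ℕ) (hk : 0 < k) (V : Fin k → Fin m → Y) : Fin (k * m) → Y :=
  fun j => V ⟨(j : ℕ) % k, Nat.mod_lt _ hk⟩
    ⟨(j : ℕ) / k, (Nat.div_lt_iff_lt_mul hk).mpr (Nat.lt_of_lt_of_eq j.isLt (Nat.mul_comm k m))⟩

lemma interleave_apply {k m : ℕ} (hk : 0 < k) (V : Fin k → Fin m → Y)
    (i : Fin k) (t : Fin m) (h : (i : ℕ) + k * (t : ℕ) < k * m) :
    interleave k m hk V ⟨(i : ℕ) + k * (t : ℕ), h⟩ = V i t := by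
  unfold interleave
  have ha : (⟨((i : ℕ) + k * (t : ℕ)) % k, Nat.mod_lt _ hk⟩ : Fin k) = i :=
    Fin.ext (modk i.isLt t)
  have hb : (⟨((i : ℕ) + k * (t : ℕ)) / k,
      (Nat.div_lt_iff_lt_mul hk).mpr (Nat.lt_of_lt_of_eq h (Nat.mul_comm k m))⟩ : Fin m) = t :=
    Fin.ext (divk hk i.isLt t)
  rw [ha, hb]

lemma interleave_bijective {k m : ℕ} (hk : 0 < k) :
    Function.Bijective (interleave (Y := Y) k m hk) := by
  apply Function.bijective_iff_has_inverse.mpr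
  refine ⟨fun g i t => g ⟨(i : ℕ) + k * (t : ℕ), ltkm i.isLt t.isLt⟩, ?_, ?_⟩
  · intro V
    funext i t
    exact interleave_apply hk V i t _
  · intro g
    funext j
    unfold interleave
    exact congrArg g (Fin.ext (by simp [Nat.mod_add_div]))

lemma subseqMod_interleave {k m : ℕ} (hk : 0 < k) (V : Fin k → Fin m → Y) (i : Fin k) :
    subseqMod k (i : ℕ) (List.ofFn (interleave k m hk V)) = List.ofFn (V i) := by
  rw [subseqMod_eq_sub, sub_ofFn k (i : ℕ) i.isLt m _]
  exact congrArg List.ofFn (funext fun t => interleave_apply hk V i t _)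

lemma cycLik_interleave [Fintype Y] (M : A → X → Y → ℝ) {k : ℕ} (hk : 0 < k)
    (a : Fin k → A) (x : X) (m : ℕ) (V : Fin k → Fin m → Y) :
    cycLik M hk a x 0 (List.ofFn (interleave k m hk V)) =
      ∏ i : Fin k, ∏ t : Fin m, M (a i) x (V i t) := by
  rw [cycLik_ofFn]
  rw [← Fintype.prod_prod_type (f := fun q : Fin k × Fin m => M (a q.1) x (V q.1 q.2))]
  refine (Fintype.prod_bijective (fun q : Fin k × Fin m =>
    (⟨(q.1 : ℕ) + k * (q.2 : ℕ), ltkm q.1.isLt q.2.isLt⟩ : Fin (k * m))) ?_ _ _ ?_).symm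
  · apply Function.bijective_iff_has_inverse.mpr
    refine ⟨fun j => (⟨(j : ℕ) % k, Nat.mod_lt _ hk⟩,
      ⟨(j : ℕ) / k, (Nat.div_lt_iff_lt_mul hk).mpr (Nat.lt_of_lt_of_eq j.isLt (Nat.mul_comm k m))⟩), ?_, ?_⟩
    · rintro ⟨i, t⟩
      refine Prod.ext (Fin.ext ?_) (Fin.ext ?_)
      · exact modk i.isLt t
      · exact divk hk i.isLt t
    · intro j
      exact Fin.ext (by simp [Nat.mod_add_div])
  · rintro ⟨i, t⟩
    have h1 : ((0 : ℕ) + ((i : ℕ) + k * (t : ℕ))) % k = (i : ℕ) := by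
      rw [Nat.zero_add]; exact modk i.isLt t
    have ha : (⟨((0 : ℕ) + ((i : ℕ) + k * (t : ℕ))) % k, Nat.mod_lt _ hk⟩ : Fin k) = i :=
      Fin.ext h1
    rw [ha, interleave_apply hk V i t _]

/-- Lemma B.2: for the lock-step strategy, `n` a multiple of `k`,
`x ∈ X` and `ε > 0`, the probability (given `x`) of the set
`𝒰^{(n)}(x,ε) = {y^n : D(t_{y^n(i)}‖p_{a_i}(·|x)) ≤ ε for all i}` is at least
`1 − 2^{−(n/k)ε}·(n/k + 1)^{k|Y|}·C`, where `C = k·max_{1≤i≤k} C(k,i)`. -/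
theorem typical_set_probability_bound
    [Fintype X] [Fintype Y] [DecidableEq Y] [Fintype A]
    [Nonempty X] [Nonempty Y] [Nonempty A]
    (M : A → X → Y → ℝ) (hM : IsMechanism M)
    (k : ℕ) (hk : 0 < k) (a : Fin k → A) (ha : Function.Bijective a)
    (n : ℕ) (hdvd : k ∣ n) (x : X) (ε : ℝ) (hε : 0 < ε) :
    1 - (2 : ℝ) ^ (-((n : ℝ) / (k : ℝ)) * ε) *
          ((n : ℝ) / (k : ℝ) + 1) ^ (k * Fintype.card Y) *
          ((k * ((Finset.Icc 1 k).sup fun i => Nat.choose k i) : ℕ) : ℝ) ≤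
      ∑' ys : List Y,
        if ys.length = n ∧
            (∀ i : Fin k, klD (typeOf (subseqMod k i ys)) (M (a i) x) ≤ (ε : EReal))
          then cycLik M hk a x 0 ys else 0 := by
  classical
  obtain ⟨m, rfl⟩ := hdvd
  have hkR : (0:ℝ) < k := by exact_mod_cast hk
  have hnm : ((k * m : ℕ) : ℝ) / (k : ℝ) = (m : ℝ) := by
    push_cast
    field_simp
  rw [hnm]
  have hsup1 : 1 ≤ (Finset.Icc 1 k).sup fun i => Nat.choose k i := by
    have hkmem : k ∈ Finset.Icc 1 k := Finset.mem_Icc.mpr ⟨hk, le_refl k⟩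
    have := Finset.le_sup (f := fun i => Nat.choose k i) hkmem
    simpa [Nat.choose_self] using this
  have hCk : (k : ℝ) ≤ ((k * ((Finset.Icc 1 k).sup fun i => Nat.choose k i) : ℕ) : ℝ) := by
    have : k * 1 ≤ k * ((Finset.Icc 1 k).sup fun i => Nat.choose k i) :=
      Nat.mul_le_mul_left k hsup1
    exact_mod_cast (by omega : k ≤ k * ((Finset.Icc 1 k).sup fun i => Nat.choose k i))
  have hC1 : (1:ℝ) ≤ ((k * ((Finset.Icc 1 k).sup fun i => Nat.choose k i) : ℕ) : ℝ) := by
    have : (1:ℝ) ≤ (k:ℝ) := by exact_mod_cast hk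
    linarith
  have htnn : (0:ℝ) ≤ ∑' ys : List Y,
      if ys.length = k * m ∧
          (∀ i : Fin k, klD (typeOf (subseqMod k i ys)) (M (a i) x) ≤ (ε : EReal))
        then cycLik M hk a x 0 ys else 0 := by
    apply tsum_nonneg
    intro ys
    split
    · exact cycLik_nonneg M hM hk a x ys 0
    · exact le_refl 0
  rcases Nat.eq_zero_or_pos m with rfl | hm
  · simp only [Nat.cast_zero, neg_zero, zero_mul, Real.rpow_zero, zero_add, one_pow, one_mul]
    linarith
  · -- main case : m ≥ 1
    have hvanish : ∀ l ∉ (listsLen (k*m) : Finset (List Y)),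
        (if l.length = k * m ∧
            (∀ i : Fin k, klD (typeOf (subseqMod k i l)) (M (a i) x) ≤ (ε : EReal))
          then cycLik M hk a x 0 l else 0) = 0 := by
      intro l hl
      rw [if_neg]
      intro hcond
      exact hl ((mem_listsLen (k*m) l).mpr hcond.1)
    rw [tsum_eq_sum hvanish, sum_listsLen]
    have hreind := Fintype.sum_bijective (interleave (Y := Y) k m hk)
      (interleave_bijective hk)
      (fun V => (if (List.ofFn (interleave k m hk V)).length = k * m ∧
          (∀ i : Fin k, klD (typeOf (subseqMod k i (List.ofFn (interleave k m hk V))))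
            (M (a i) x) ≤ (ε : EReal))
        then cycLik M hk a x 0 (List.ofFn (interleave k m hk V)) else 0))
      (fun g => (if (List.ofFn g).length = k * m ∧
          (∀ i : Fin k, klD (typeOf (subseqMod k i (List.ofFn g)))
            (M (a i) x) ≤ (ε : EReal))
        then cycLik M hk a x 0 (List.ofFn g) else 0))
      (fun V => rfl)
    rw [← hreind]
    have hterm : ∀ V : Fin k → Fin m → Y,
        (if (List.ofFn (interleave k m hk V)).length = k * m ∧
            (∀ i : Fin k, klD (typeOf (subseqMod k i (List.ofFn (interleave k m hk V))))
              (M (a i) x) ≤ (ε : EReal))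
          then cycLik M hk a x 0 (List.ofFn (interleave k m hk V)) else 0)
          = ∏ i : Fin k, (if klD (typeOf (List.ofFn (V i))) (M (a i) x) ≤ (ε : EReal)
              then ∏ t, M (a i) x (V i t) else 0) := by
      intro V
      have hlen : (List.ofFn (interleave k m hk V)).length = k * m := by simp
      simp only [hlen, true_and, subseqMod_interleave hk V, cycLik_interleave M hk a x m V]
      exact ite_forall_prod _ _
    rw [Finset.sum_congr rfl (fun V _ => hterm V)]
    have hex := Finset.prod_univ_sum (fun _ : Fin k => (Finset.univ : Finset (Fin m → Y)))
      (fun (i : Fin k) (w : Fin m → Y) =>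
        if klD (typeOf (List.ofFn w)) (M (a i) x) ≤ (ε : EReal)
          then ∏ t, M (a i) x (w t) else 0)
    rw [Fintype.piFinset_univ] at hex
    rw [← hex]
    -- now bound the product from below
    have hsplit : ∀ i : Fin k,
        (∑ w : Fin m → Y, if klD (typeOf (List.ofFn w)) (M (a i) x) ≤ (ε : EReal)
            then ∏ t, M (a i) x (w t) else 0)
        = 1 - ∑ w : Fin m → Y,
            (if ¬ (klD (typeOf (List.ofFn w)) (M (a i) x) ≤ (ε : EReal))
              then ∏ t, M (a i) x (w t) else 0) := by
      intro i
      have hpt : ∀ w : Fin m → Y,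
          (if klD (typeOf (List.ofFn w)) (M (a i) x) ≤ (ε : EReal)
            then ∏ t, M (a i) x (w t) else 0)
          + (if ¬ (klD (typeOf (List.ofFn w)) (M (a i) x) ≤ (ε : EReal))
              then ∏ t, M (a i) x (w t) else 0) = ∏ t, M (a i) x (w t) := by
        intro w
        by_cases h : klD (typeOf (List.ofFn w)) (M (a i) x) ≤ (ε : EReal) <;> simp [h]
      have := Finset.sum_congr rfl (fun w (_ : w ∈ Finset.univ) => hpt w)
      rw [Finset.sum_add_distrib] at this
      rw [sum_prod_eq_one (M (a i) x) ((hM (a i) x).2) m] at this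
      linarith
    have hbadnn : ∀ i : Fin k, 0 ≤ ∑ w : Fin m → Y,
        (if ¬ (klD (typeOf (List.ofFn w)) (M (a i) x) ≤ (ε : EReal))
          then ∏ t, M (a i) x (w t) else 0) := by
      intro i
      apply Finset.sum_nonneg
      intro w _
      split
      · exact Finset.prod_nonneg (fun t _ => (hM (a i) x).1 (w t))
      · exact le_refl 0
    have hbadB : ∀ i : Fin k, ∑ w : Fin m → Y,
        (if ¬ (klD (typeOf (List.ofFn w)) (M (a i) x) ≤ (ε : EReal))
          then ∏ t, M (a i) x (w t) else 0)
        ≤ ((m : ℝ) + 1) ^ (Fintype.card Y) * 2 ^ (-(m:ℝ) * ε) :=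
      fun i => single_class (M (a i) x) (hM (a i) x) m hm ε hε
    have hs0 : ∀ i : Fin k, 0 ≤ ∑ w : Fin m → Y,
        (if klD (typeOf (List.ofFn w)) (M (a i) x) ≤ (ε : EReal)
          then ∏ t, M (a i) x (w t) else 0) := by
      intro i
      apply Finset.sum_nonneg
      intro w _
      split
      · exact Finset.prod_nonneg (fun t _ => (hM (a i) x).1 (w t))
      · exact le_refl 0
    have hs1 : ∀ i : Fin k, (∑ w : Fin m → Y,
        (if klD (typeOf (List.ofFn w)) (M (a i) x) ≤ (ε : EReal)
          then ∏ t, M (a i) x (w t) else 0)) ≤ 1 := by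
      intro i
      rw [hsplit i]
      linarith [hbadnn i]
    have hlb := one_sub_sum_le_prod Finset.univ
      (fun i : Fin k => ∑ w : Fin m → Y,
        (if klD (typeOf (List.ofFn w)) (M (a i) x) ≤ (ε : EReal)
          then ∏ t, M (a i) x (w t) else 0))
      (fun i _ => hs0 i) (fun i _ => hs1 i)
    have hsumbad : ∑ i : Fin k,
        (1 - ∑ w : Fin m → Y,
          (if klD (typeOf (List.ofFn w)) (M (a i) x) ≤ (ε : EReal)
            then ∏ t, M (a i) x (w t) else 0))
        ≤ (k : ℝ) * (((m : ℝ) + 1) ^ (Fintype.card Y) * 2 ^ (-(m:ℝ) * ε)) := by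
      have hpt : ∀ i : Fin k,
          (1 - ∑ w : Fin m → Y,
            (if klD (typeOf (List.ofFn w)) (M (a i) x) ≤ (ε : EReal)
              then ∏ t, M (a i) x (w t) else 0))
          ≤ ((m : ℝ) + 1) ^ (Fintype.card Y) * 2 ^ (-(m:ℝ) * ε) := by
        intro i
        rw [hsplit i]
        have := hbadB i
        linarith
      calc ∑ i : Fin k, (1 - ∑ w : Fin m → Y,
            (if klD (typeOf (List.ofFn w)) (M (a i) x) ≤ (ε : EReal)
              then ∏ t, M (a i) x (w t) else 0))
          ≤ ∑ _i : Fin k, ((m : ℝ) + 1) ^ (Fintype.card Y) * 2 ^ (-(m:ℝ) * ε) :=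
            Finset.sum_le_sum (fun i _ => hpt i)
        _ = (k : ℝ) * (((m : ℝ) + 1) ^ (Fintype.card Y) * 2 ^ (-(m:ℝ) * ε)) := by
            rw [Finset.sum_const, Finset.card_univ, Fintype.card_fin, nsmul_eq_mul]
    -- final numeric comparison
    have hfinal : (k : ℝ) * (((m : ℝ) + 1) ^ (Fintype.card Y) * 2 ^ (-(m:ℝ) * ε))
        ≤ (2 : ℝ) ^ (-(m:ℝ) * ε) * ((m : ℝ) + 1) ^ (k * Fintype.card Y) *
          ((k * ((Finset.Icc 1 k).sup fun i => Nat.choose k i) : ℕ) : ℝ) := by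
      have hpow : ((m : ℝ) + 1) ^ (Fintype.card Y) ≤ ((m : ℝ) + 1) ^ (k * Fintype.card Y) := by
        apply pow_le_pow_right₀ (by linarith [Nat.cast_nonneg (α := ℝ) m])
        calc Fintype.card Y = 1 * Fintype.card Y := (one_mul _).symm
          _ ≤ k * Fintype.card Y := Nat.mul_le_mul_right _ hk
      have h2pos : (0:ℝ) < (2 : ℝ) ^ (-(m:ℝ) * ε) := Real.rpow_pos_of_pos two_pos _
      calc (k : ℝ) * (((m : ℝ) + 1) ^ (Fintype.card Y) * 2 ^ (-(m:ℝ) * ε))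
          ≤ ((k * ((Finset.Icc 1 k).sup fun i => Nat.choose k i) : ℕ) : ℝ) *
            (((m : ℝ) + 1) ^ (k * Fintype.card Y) * 2 ^ (-(m:ℝ) * ε)) := by
            apply mul_le_mul hCk
              (mul_le_mul_of_nonneg_right hpow (le_of_lt h2pos))
              (by positivity) (by positivity)
        _ = (2 : ℝ) ^ (-(m:ℝ) * ε) * ((m : ℝ) + 1) ^ (k * Fintype.card Y) *
            ((k * ((Finset.Icc 1 k).sup fun i => Nat.choose k i) : ℕ) : ℝ) := by ring
    calc 1 - (2 : ℝ) ^ (-(m:ℝ) * ε) * ((m : ℝ) + 1) ^ (k * Fintype.card Y) *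
          ((k * ((Finset.Icc 1 k).sup fun i => Nat.choose k i) : ℕ) : ℝ)
        ≤ 1 - (k : ℝ) * (((m : ℝ) + 1) ^ (Fintype.card Y) * 2 ^ (-(m:ℝ) * ε)) := by
          linarith
      _ ≤ 1 - ∑ i : Fin k, (1 - ∑ w : Fin m → Y,
            (if klD (typeOf (List.ofFn w)) (M (a i) x) ≤ (ε : EReal)
              then ∏ t, M (a i) x (w t) else 0)) := by linarith
      _ ≤ ∏ i : Fin k, ∑ w : Fin m → Y,
            (if klD (typeOf (List.ofFn w)) (M (a i) x) ≤ (ε : EReal)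
              then ∏ t, M (a i) x (w t) else 0) := hlb

end
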